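/- For the k-fence digraph game played by n parties with single-output partial-order correlations, the winning probability is at most 1 − (k−1)/(2k²); equivalently, Σ over the k² arcs (s,r) and bits x of p(x|s,r,x) is at most k² + (k² − k + 1). -/
import Mathlib


noncomputable section

/-- Single-output partial-order correlations: `p s r x a` is the probability
that the receiver `r` outputs `a` given that the sender `s` received the bit
`x`.  They decompose as a finite mixture over partial orders `σ i` of
conditional distributions in which the output is independent of `x` whenever
the sender does not precede the receiver. -/
def IsPOCorr (n : ℕ) (p : Fin n → Fin n → Bool → Bool → ℝ) : Prop :=
  ∃ (m : ℕ) (μ : Fin m → ℝ) (σ : Fin m → Fin n → Fin n → Prop)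
    (q : Fin m → Fin n → Fin n → Bool → Bool → ℝ),
    (∀ i, 0 ≤ μ i) ∧ (∑ i, μ i = 1) ∧
    (∀ i, IsPartialOrder (Fin n) (σ i)) ∧
    (∀ i s r x a, 0 ≤ q i s r x a) ∧
    (∀ i s r x, ∑ a, q i s r x a = 1) ∧
    (∀ i s r, ¬ σ i s r → ∀ a, q i s r false a = q i s r true a) ∧
    (∀ s r x a, p s r x a = ∑ i, μ i * q i s r x a)

open Finset

/-- Counting lemma: if `Q i` marks spikes and `P i j` marks cross arcs of a
fence, and no "4-cycle" configuration occurs, then at most `k*(k-1)+1` arcs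
are marked. -/
lemma fence_count {k : ℕ} (Q : Fin k → Prop) (P : Fin k → Fin k → Prop)
    [DecidablePred Q] [∀ a, DecidablePred (P a)]
    (h : ∀ i j, i ≠ j → Q i → Q j → P i j → P j i → False) :
    (univ.filter Q).card +
      (univ.filter (fun x : Fin k × Fin k => x.1 ≠ x.2 ∧ P x.1 x.2)).card
      ≤ k * (k - 1) + 1 := by
  classical
  set S := univ.filter Q with hSdef
  set C := univ.filter (fun x : Fin k × Fin k => x.1 ≠ x.2 ∧ P x.1 x.2) with hCdef
  have hD : ((univ : Finset (Fin k)).offDiag).card = k * (k - 1) := by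
    rw [Finset.offDiag_card, Finset.card_univ, Fintype.card_fin]
    cases k with
    | zero => rfl
    | succ k' => simp [Nat.succ_sub_one, Nat.succ_mul, Nat.mul_succ]
  have hCD : C ⊆ (univ : Finset (Fin k)).offDiag := by
    intro x hx
    simp only [hCdef, mem_filter, mem_univ, true_and] at hx
    simp [Finset.mem_offDiag, hx.1]
  have hCcard : C.card ≤ k * (k - 1) := hD ▸ Finset.card_le_card hCD
  rcases S.eq_empty_or_nonempty with hS | ⟨s0, hs0⟩
  · rw [hS]; simpa using Nat.le_succ_of_le hCcard
  · have hQ0 : Q s0 := (mem_filter.mp hs0).2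
    set g : Fin k → Fin k × Fin k := fun x => if (s0, x) ∈ C then (x, s0) else (s0, x)
      with hgdef
    have hg1 : ∀ x ∈ S.erase s0, g x ∈ (univ : Finset (Fin k)).offDiag \ C := by
      intro x hx
      have hxne : x ≠ s0 := (mem_erase.mp hx).1
      have hQx : Q x := (mem_filter.mp (mem_erase.mp hx).2).2
      rw [Finset.mem_sdiff]
      by_cases hc : (s0, x) ∈ C
      · have hP : P s0 x := ((mem_filter.mp hc).2).2
        have hnc : (x, s0) ∉ C := by
          intro hc2
          exact h s0 x (Ne.symm hxne) hQ0 hQx hP ((mem_filter.mp hc2).2).2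
        constructor
        · simp [hgdef, hc, Finset.mem_offDiag, hxne]
        · simpa [hgdef, hc] using hnc
      · constructor
        · simp [hgdef, hc, Finset.mem_offDiag, Ne.symm hxne]
        · simpa [hgdef, hc] using hc
    have hg2 : Set.InjOn g (S.erase s0) := by
      intro x hx y hy hxy
      have hxne : x ≠ s0 := (mem_erase.mp hx).1
      have hyne : y ≠ s0 := (mem_erase.mp hy).1
      simp only [hgdef] at hxy
      split_ifs at hxy <;> simp_all [Prod.ext_iff]
    have hcard : (S.erase s0).card ≤ ((univ : Finset (Fin k)).offDiag \ C).card :=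
      Finset.card_le_card_of_injOn g hg1 hg2
    have h1 : (S.erase s0).card = S.card - 1 := Finset.card_erase_of_mem hs0
    have h2 : ((univ : Finset (Fin k)).offDiag \ C).card
        = k * (k - 1) - C.card := by rw [Finset.card_sdiff_of_subset hCD, hD]
    have h3 : 1 ≤ S.card := Finset.card_pos.mpr ⟨s0, hs0⟩
    omega

theorem stmt13 (n k : ℕ) (hk : 2 ≤ k)
    (p : Fin n → Fin n → Bool → Bool → ℝ) (hp : IsPOCorr n p)
    (w : Bool → Fin k → Fin n)
    (hw : Function.Injective fun q : Bool × Fin k => w q.1 q.2) :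
    (1 / (2 * (k : ℝ) ^ 2)) *
        ((∑ i : Fin k, ∑ x : Bool, p (w false i) (w true i) x x) +
          ∑ i : Fin k, ∑ j : Fin k,
            if i = j then 0 else ∑ x : Bool, p (w true i) (w false j) x x)
      ≤ 1 - ((k : ℝ) - 1) / (2 * (k : ℝ) ^ 2) := by
  classical
  obtain ⟨m, μ, σ, q, hμ0, hμ1, hσ, hq0, hq1, hind, hdec⟩ := hp
  have hk0 : (0:ℝ) < (k : ℝ) := by
    have : 0 < k := by omega
    exact_mod_cast this
  have hqle1 : ∀ i s r x a, q i s r x a ≤ 1 := by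
    intro i s r x a
    have hsum : q i s r x true + q i s r x false = 1 := by
      simpa [Fintype.sum_bool] using hq1 i s r x
    cases a
    · have := hq0 i s r x true; linarith
    · have := hq0 i s r x false; linarith
  have harc : ∀ i s r, (∑ x : Bool, q i s r x x) ≤ 1 + (if σ i s r then (1:ℝ) else 0) := by
    intro i s r
    rw [Fintype.sum_bool]
    by_cases hs : σ i s r
    · simp only [hs, if_true]
      have h1 := hqle1 i s r true true
      have h2 := hqle1 i s r false false
      linarith
    · simp only [hs, if_false]
      have h1 : q i s r true true = q i s r false true := (hind i s r hs true).symm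
      have hsum : q i s r false true + q i s r false false = 1 := by
        simpa [Fintype.sum_bool] using hq1 i s r false
      linarith
  -- per-mixture-component bound
  have hT : ∀ i,
      ((∑ j : Fin k, ∑ x : Bool, q i (w false j) (w true j) x x) +
        ∑ a : Fin k, ∑ b : Fin k,
          if a = b then 0 else ∑ x : Bool, q i (w true a) (w false b) x x)
      ≤ 2 * (k : ℝ) ^ 2 - ((k : ℝ) - 1) := by
    intro i
    have hpo := hσ i
    have hcyc : ∀ a b : Fin k, a ≠ b →
        σ i (w false a) (w true a) → σ i (w false b) (w true b) →
        σ i (w true a) (w false b) → σ i (w true b) (w false a) → False := by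
      intro a b hab h1 h2 h3 h4
      have t1 : σ i (w false a) (w false b) := hpo.trans _ _ _ h1 h3
      have t2 : σ i (w false b) (w false a) := hpo.trans _ _ _ h2 h4
      have heq : w false a = w false b := hpo.antisymm _ _ t1 t2
      have := hw (show (fun q : Bool × Fin k => w q.1 q.2) (false, a)
        = (fun q : Bool × Fin k => w q.1 q.2) (false, b) from heq)
      simp only [Prod.mk.injEq] at this
      exact hab this.2
    have hcount := fence_count (fun a => σ i (w false a) (w true a))
      (fun a b => σ i (w true a) (w false b)) hcyc
    have hb1 : (∑ j : Fin k, ∑ x : Bool, q i (w false j) (w true j) x x)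
        ≤ (k : ℝ) + (univ.filter (fun a => σ i (w false a) (w true a))).card := by
      calc (∑ j : Fin k, ∑ x : Bool, q i (w false j) (w true j) x x)
          ≤ ∑ j : Fin k, (1 + (if σ i (w false j) (w true j) then (1:ℝ) else 0)) :=
            Finset.sum_le_sum fun j _ => harc i _ _
        _ = (k : ℝ) + (univ.filter (fun a => σ i (w false a) (w true a))).card := by
            rw [Finset.sum_add_distrib, Finset.sum_boole]
            simp
    have hb2 : (∑ a : Fin k, ∑ b : Fin k,
          if a = b then 0 else ∑ x : Bool, q i (w true a) (w false b) x x)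
        ≤ ((k : ℝ) ^ 2 - (k : ℝ)) +
          (univ.filter (fun x : Fin k × Fin k =>
            x.1 ≠ x.2 ∧ σ i (w true x.1) (w false x.2))).card := by
      have step1 : (∑ a : Fin k, ∑ b : Fin k,
            if a = b then 0 else ∑ x : Bool, q i (w true a) (w false b) x x)
          ≤ ∑ a : Fin k, ∑ b : Fin k,
            ((if a = b then 0 else (1:ℝ)) +
              (if a ≠ b ∧ σ i (w true a) (w false b) then (1:ℝ) else 0)) := by
        refine Finset.sum_le_sum fun a _ => Finset.sum_le_sum fun b _ => ?_
        by_cases hab : a = b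
        · simp [hab]
        · simp only [hab, if_false, ne_eq, not_false_eq_true, true_and]
          exact harc i _ _
      refine step1.trans ?_
      have e1 : (∑ a : Fin k, ∑ b : Fin k, if a = b then 0 else (1:ℝ))
          = (k : ℝ) ^ 2 - (k : ℝ) := by
        have hrow : ∀ a : Fin k, (∑ b : Fin k, if a = b then (0:ℝ) else 1)
            = (k : ℝ) - 1 := by
          intro a
          have : ∀ b : Fin k, (if a = b then (0:ℝ) else 1)
              = 1 - (if a = b then 1 else 0) := by
            intro b; split_ifs <;> ring
          simp_rw [this]
          rw [Finset.sum_sub_distrib, Finset.sum_ite_eq]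
          simp
        simp_rw [hrow]
        rw [Finset.sum_const, Finset.card_univ, Fintype.card_fin]
        push_cast; ring
      have e2 : (∑ a : Fin k, ∑ b : Fin k,
            if a ≠ b ∧ σ i (w true a) (w false b) then (1:ℝ) else 0)
          = (univ.filter (fun x : Fin k × Fin k =>
              x.1 ≠ x.2 ∧ σ i (w true x.1) (w false x.2))).card := by
        rw [← Fintype.sum_prod_type']
        rw [Finset.sum_boole]
      simp_rw [Finset.sum_add_distrib]
      rw [e1, e2]
    -- combine
    have hcast : ((univ.filter (fun a => σ i (w false a) (w true a))).card : ℝ) +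
        ((univ.filter (fun x : Fin k × Fin k =>
            x.1 ≠ x.2 ∧ σ i (w true x.1) (w false x.2))).card : ℝ)
        ≤ (k : ℝ) ^ 2 - (k : ℝ) + 1 := by
      have h2 : ((k * (k - 1) + 1 : ℕ) : ℝ) = (k : ℝ) ^ 2 - (k : ℝ) + 1 := by
        have hk1 : 1 ≤ k := by omega
        push_cast [Nat.cast_sub hk1]
        ring
      have h1 : (((univ.filter (fun a => σ i (w false a) (w true a))).card
          + (univ.filter (fun x : Fin k × Fin k =>
              x.1 ≠ x.2 ∧ σ i (w true x.1) (w false x.2))).card : ℕ) : ℝ)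
          ≤ ((k * (k - 1) + 1 : ℕ) : ℝ) := Nat.cast_le.mpr hcount
      rw [h2] at h1
      push_cast at h1
      linarith
    linarith
  -- rewrite the p-sums as a mixture
  have hA : (∑ j : Fin k, ∑ x : Bool, p (w false j) (w true j) x x)
      = ∑ i, μ i * (∑ j : Fin k, ∑ x : Bool, q i (w false j) (w true j) x x) := by
    simp_rw [hdec]
    calc ∑ j : Fin k, ∑ x : Bool, ∑ i, μ i * q i (w false j) (w true j) x x
        = ∑ j : Fin k, ∑ i, ∑ x : Bool, μ i * q i (w false j) (w true j) x x :=
          Finset.sum_congr rfl fun j _ => Finset.sum_comm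
      _ = ∑ i, ∑ j : Fin k, ∑ x : Bool, μ i * q i (w false j) (w true j) x x :=
          Finset.sum_comm
      _ = ∑ i, μ i * ∑ j : Fin k, ∑ x : Bool, q i (w false j) (w true j) x x := by
          simp_rw [Finset.mul_sum]
  have hB : (∑ a : Fin k, ∑ b : Fin k,
        if a = b then 0 else ∑ x : Bool, p (w true a) (w false b) x x)
      = ∑ i, μ i * (∑ a : Fin k, ∑ b : Fin k,
          if a = b then 0 else ∑ x : Bool, q i (w true a) (w false b) x x) := by
    have point : ∀ a b : Fin k,
        (if a = b then 0 else ∑ x : Bool, p (w true a) (w false b) x x)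
        = ∑ i, μ i * (if a = b then 0 else ∑ x : Bool, q i (w true a) (w false b) x x) := by
      intro a b
      by_cases hab : a = b
      · simp [hab]
      · simp only [hab, if_false]
        simp_rw [hdec, Finset.mul_sum]
        exact Finset.sum_comm
    simp_rw [point]
    calc ∑ a : Fin k, ∑ b : Fin k, ∑ i, μ i *
            (if a = b then 0 else ∑ x : Bool, q i (w true a) (w false b) x x)
        = ∑ a : Fin k, ∑ i, ∑ b : Fin k, μ i *
            (if a = b then 0 else ∑ x : Bool, q i (w true a) (w false b) x x) :=
          Finset.sum_congr rfl fun a _ => Finset.sum_comm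
      _ = ∑ i, ∑ a : Fin k, ∑ b : Fin k, μ i *
            (if a = b then 0 else ∑ x : Bool, q i (w true a) (w false b) x x) :=
          Finset.sum_comm
      _ = ∑ i, μ i * (∑ a : Fin k, ∑ b : Fin k,
            if a = b then 0 else ∑ x : Bool, q i (w true a) (w false b) x x) := by
          simp_rw [Finset.mul_sum]
  rw [hA, hB, ← Finset.sum_add_distrib]
  have hmix : (∑ i, (μ i * (∑ j : Fin k, ∑ x : Bool, q i (w false j) (w true j) x x) +
        μ i * (∑ a : Fin k, ∑ b : Fin k,
          if a = b then 0 else ∑ x : Bool, q i (w true a) (w false b) x x)))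
      ≤ 2 * (k : ℝ) ^ 2 - ((k : ℝ) - 1) := by
    calc (∑ i, (μ i * _ + μ i * _))
        ≤ ∑ i, μ i * (2 * (k : ℝ) ^ 2 - ((k : ℝ) - 1)) := by
          refine Finset.sum_le_sum fun i _ => ?_
          rw [← mul_add]
          exact mul_le_mul_of_nonneg_left (hT i) (hμ0 i)
      _ = 2 * (k : ℝ) ^ 2 - ((k : ℝ) - 1) := by
          rw [← Finset.sum_mul, hμ1, one_mul]
  have h2k : (0:ℝ) < 2 * (k : ℝ) ^ 2 := by positivity
  calc (1 / (2 * (k : ℝ) ^ 2)) * _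
      ≤ (1 / (2 * (k : ℝ) ^ 2)) * (2 * (k : ℝ) ^ 2 - ((k : ℝ) - 1)) :=
        mul_le_mul_of_nonneg_left hmix (by positivity)
    _ = 1 - ((k : ℝ) - 1) / (2 * (k : ℝ) ^ 2) := by
        field_simp
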